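/- Let f, g ∈ K[x] be polynomials with g ≠ 0 satisfying f·g′ − f′·g = g, and suppose deg f = 1. Then there exist c ∈ K and a natural number k with k ≠ 1 such that g = c·f^k. -/

import Mathlib

open Polynomial

lemma aux_pow {K : Type*} [Field K] [CharZero K] (f : Polynomial K)
    (hf : f.natDegree = 1) :
    ∀ (n : ℕ) (g : Polynomial K), g ≠ 0 → g.natDegree = n → ∀ b : K,
      f * derivative g = C b * g → ∃ c, g = C c * f ^ n := by
  have hf0 : f ≠ 0 := fun h => by simp [h] at hf
  have hf' : derivative f = C (f.coeff 1) := by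
    conv_lhs => rw [Polynomial.eq_X_add_C_of_natDegree_le_one hf.le]
    simp
  intro n
  induction n with
  | zero =>
    intro g hg hdeg b heq
    exact ⟨g.coeff 0, by simpa using Polynomial.eq_C_of_natDegree_eq_zero hdeg⟩
  | succ n ih =>
    intro g hg hdeg b heq
    have hb : b ≠ 0 := by
      intro h0
      have : derivative g = 0 := by
        have := heq
        rw [h0] at this
        simp at this
        rcases this with h | h
        · exact absurd h hf0
        · exact Polynomial.derivative_eq_zero.mpr h
      have := Polynomial.natDegree_eq_zero_of_derivative_eq_zero this
      omega
    have hdvd : f ∣ g := by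
      have h1 : f ∣ C b * g := ⟨derivative g, heq.symm⟩
      have : f ∣ C b⁻¹ * (C b * g) := Dvd.dvd.mul_left h1 _
      rwa [← mul_assoc, ← C_mul, inv_mul_cancel₀ hb, C_1, one_mul] at this
    obtain ⟨h, rfl⟩ := hdvd
    have hh0 : h ≠ 0 := fun hz => hg (by simp [hz])
    have hhdeg : h.natDegree = n := by
      rw [Polynomial.natDegree_mul hf0 hh0, hf] at hdeg
      omega
    have heq' : f * derivative h = C (b - f.coeff 1) * h := by
      have hexp : f * (derivative f * h + f * derivative h) = C b * (f * h) := by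
        rw [Polynomial.derivative_mul] at heq; exact heq
      have : derivative f * h + f * derivative h = C b * h := by
        apply mul_left_cancel₀ hf0
        rw [hexp]; ring
      rw [hf'] at this
      rw [C_sub]
      linear_combination this
    obtain ⟨c, hc⟩ := ih h hh0 hhdeg (b - f.coeff 1) heq'
    exact ⟨c, by rw [hc]; ring⟩

/-- In the proof of Proposition 3: if `f·g′ − f′·g = g` with `g ≠ 0` and `deg f = 1`,
then `g` is proportional to `f^k` for some `k ≠ 1`. -/
theorem g_proportional_to_power_of_f
    (K : Type*) [Field K] [IsAlgClosed K] [CharZero K]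
    (f g : Polynomial K) (hg : g ≠ 0)
    (hrel : f * Polynomial.derivative g - Polynomial.derivative f * g = g)
    (hdeg : f.natDegree = 1) :
    ∃ (c : K) (k : ℕ), k ≠ 1 ∧ g = Polynomial.C c * f ^ k := by
  have hf' : Polynomial.derivative f = Polynomial.C (f.coeff 1) := by
    conv_lhs => rw [Polynomial.eq_X_add_C_of_natDegree_le_one hdeg.le]
    simp
  have heq : f * Polynomial.derivative g = Polynomial.C (f.coeff 1 + 1) * g := by
    rw [Polynomial.C_add, Polynomial.C_1, ← hf']
    linear_combination hrel
  obtain ⟨c, hc⟩ := aux_pow f hdeg g.natDegree g hg rfl _ heq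
  refine ⟨c, g.natDegree, ?_, hc⟩
  intro hk1
  rw [hk1, pow_one] at hc
  apply hg
  rw [hc] at hrel ⊢
  rw [Polynomial.derivative_C_mul] at hrel
  linear_combination -hrel
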